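/- Let f : ℝ^d → ℝ^d be continuously differentiable with ‖Df(x)‖ ≤ c(1 + ‖x‖^c) for all x and some c > 0. Let 0 < h_min ≤ h_max with h_max = ρ·h_min for some ρ > 0, and let 0 < δ ≤ h_max. Let y ∈ ℝ^d and let h be a real number with h_min < h and h·(1 + ‖y‖^(1+c)) ≤ δ·‖y‖. Then ‖f(y)‖² ≤ (2c + ‖f(0)‖)²·ρ²·‖y‖². -/

import Mathlib

theorem admissible_part_iv (d : ℕ)
    (f : EuclideanSpace ℝ (Fin d) → EuclideanSpace ℝ (Fin d))
    (hf : ContDiff ℝ 1 f) (c : ℝ) (hc : 0 < c)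
    (hDf : ∀ x, ‖fderiv ℝ f x‖ ≤ c * (1 + ‖x‖ ^ c))
    (hmin hmax ρ δ : ℝ)
    (hmin_pos : 0 < hmin) (hminmax : hmin ≤ hmax)
    (hρ : 0 < ρ) (hratio : hmax = ρ * hmin)
    (hδ_pos : 0 < δ) (hδ : δ ≤ hmax)
    (y : EuclideanSpace ℝ (Fin d)) (h : ℝ)
    (hh : hmin < h) (hstep : h * (1 + ‖y‖ ^ (1 + c)) ≤ δ * ‖y‖) :
    ‖f y‖ ^ 2 ≤ (2 * c + ‖f 0‖) ^ 2 * ρ ^ 2 * ‖y‖ ^ 2 := by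
  have hy1 : (0:ℝ) < 1 + ‖y‖ ^ (1 + c) := by positivity
  have key : 1 + ‖y‖ ^ (1 + c) ≤ ρ * ‖y‖ := by
    have h1 : hmin * (1 + ‖y‖ ^ (1 + c)) ≤ h * (1 + ‖y‖ ^ (1 + c)) :=
      mul_le_mul_of_nonneg_right hh.le hy1.le
    have h2 : δ * ‖y‖ ≤ ρ * hmin * ‖y‖ :=
      mul_le_mul_of_nonneg_right (hδ.trans_eq hratio) (norm_nonneg y)
    nlinarith [h1.trans (hstep.trans h2)]
  have hypos : 0 < ‖y‖ := by nlinarith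
  -- mean value theorem on the closed ball of radius ‖y‖
  have hbound : ∀ x ∈ Metric.closedBall (0:EuclideanSpace ℝ (Fin d)) ‖y‖,
      ‖fderiv ℝ f x‖ ≤ c * (1 + ‖y‖ ^ c) := by
    intro x hx
    refine (hDf x).trans ?_
    have hxle : ‖x‖ ≤ ‖y‖ := by
      simpa [Metric.mem_closedBall, dist_eq_norm] using hx
    have := Real.rpow_le_rpow (norm_nonneg x) hxle hc.le
    nlinarith
  have hmem0 : (0:EuclideanSpace ℝ (Fin d)) ∈ Metric.closedBall (0:EuclideanSpace ℝ (Fin d)) ‖y‖ := by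
    simp [Metric.mem_closedBall]
  have hmemy : y ∈ Metric.closedBall (0:EuclideanSpace ℝ (Fin d)) ‖y‖ := by
    simp [Metric.mem_closedBall, dist_eq_norm]
  have hmvt : ‖f y - f 0‖ ≤ c * (1 + ‖y‖ ^ c) * ‖y - 0‖ :=
    (convex_closedBall (0:EuclideanSpace ℝ (Fin d)) ‖y‖).norm_image_sub_le_of_norm_fderiv_le
      (fun x _ => (hf.differentiable one_ne_zero).differentiableAt) hbound hmem0 hmemy
  have hsplit : ‖y‖ ^ c * ‖y‖ = ‖y‖ ^ (1 + c) := by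
    rw [Real.rpow_add hypos, Real.rpow_one]; ring
  have hy_le : ‖y‖ ≤ 1 + ‖y‖ ^ (1 + c) := by
    rcases le_or_gt ‖y‖ 1 with hle | hgt
    · nlinarith [Real.rpow_nonneg (norm_nonneg y) (1 + c)]
    · have : ‖y‖ ^ (1:ℝ) ≤ ‖y‖ ^ (1 + c) :=
        Real.rpow_le_rpow_of_exponent_le hgt.le (by linarith)
      rw [Real.rpow_one] at this
      linarith
  have hdrift : ‖f y‖ ≤ (2 * c + ‖f 0‖) * (1 + ‖y‖ ^ (1 + c)) := by
    have h0 : ‖f y‖ ≤ ‖f 0‖ + c * (1 + ‖y‖ ^ c) * ‖y‖ := by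
      have := norm_sub_norm_le (f y) (f 0)
      have h0' : ‖y - 0‖ = ‖y‖ := by simp
      rw [h0'] at hmvt
      linarith
    have hcy : c * (1 + ‖y‖ ^ c) * ‖y‖ = c * ‖y‖ + c * ‖y‖ ^ (1 + c) := by
      rw [← hsplit]; ring
    rw [hcy] at h0
    nlinarith [norm_nonneg (f 0), Real.rpow_nonneg (norm_nonneg y) (1 + c)]
  have hfinal : ‖f y‖ ≤ (2 * c + ‖f 0‖) * (ρ * ‖y‖) := by
    have hA : 0 ≤ 2 * c + ‖f 0‖ := by positivity
    calc ‖f y‖ ≤ (2 * c + ‖f 0‖) * (1 + ‖y‖ ^ (1 + c)) := hdrift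
      _ ≤ (2 * c + ‖f 0‖) * (ρ * ‖y‖) := mul_le_mul_of_nonneg_left key hA
  have hsq := pow_le_pow_left₀ (norm_nonneg (f y)) hfinal 2
  calc ‖f y‖ ^ 2 ≤ ((2 * c + ‖f 0‖) * (ρ * ‖y‖)) ^ 2 := hsq
    _ = (2 * c + ‖f 0‖) ^ 2 * ρ ^ 2 * ‖y‖ ^ 2 := by ring
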